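/- For any real number γ > -3 and any δ > 0, there exists a constant C > 0 (depending on γ and δ) such that for all v ∈ ℝ³, ∫_{ℝ³} |v - v'|^γ e^{-δ|v'|²} dv' ≤ C ⟨v⟩^γ, where ⟨v⟩ = (1+|v|²)^{1/2}. -/

import Mathlib

set_option maxHeartbeats 1000000

open MeasureTheory Real Metric ENNReal

noncomputable section SingularAux

local notation "E3" => EuclideanSpace ℝ (Fin 3)

private lemma gauss_integrable' {b : ℝ} (hb : 0 < b) :
    Integrable (fun x : E3 => Real.exp (-b * ‖x‖ ^ 2)) := by
  have h := GaussianFourier.integrable_cexp_neg_mul_sq_norm_add (V := E3) (b := (b : ℂ))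
    (by simpa using hb) 0 (0 : E3)
  have h2 := h.norm
  refine h2.congr (Filter.Eventually.of_forall fun x => ?_)
  simp only [Complex.norm_exp]
  norm_num
  left
  norm_cast

private lemma gauss_lintegral_ne_top' {b : ℝ} (hb : 0 < b) :
    ∫⁻ x : E3, ENNReal.ofReal (Real.exp (-b * ‖x‖ ^ 2)) ≠ ∞ := by
  have h := (gauss_integrable' hb).hasFiniteIntegral
  rw [hasFiniteIntegral_iff_ofReal
    (Filter.Eventually.of_forall fun x => (Real.exp_pos _).le)] at h
  exact h.ne

private lemma ball_kernel' {γ : ℝ} (hγ : -3 < γ) (hγ' : γ < 0) :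
    ∃ K : ℝ≥0∞, K ≠ ∞ ∧ ∀ r : ℝ, 0 < r →
      ∫⁻ w in ball (0 : E3) r, ENNReal.ofReal (‖w‖ ^ γ) ≤
        ENNReal.ofReal (r ^ (γ + 3)) * K := by
  set q : ℝ := (2 : ℝ) ^ (-(γ + 3)) with hq
  have hq0 : 0 < q := Real.rpow_pos_of_pos two_pos _
  have hq1 : q < 1 := Real.rpow_lt_one_of_one_lt_of_neg one_lt_two (by linarith)
  set V1 : ℝ≥0∞ := volume (ball (0 : E3) 1) with hV1
  have hV1top : V1 ≠ ∞ := measure_ball_lt_top.ne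
  refine ⟨ENNReal.ofReal ((2:ℝ) ^ (-γ)) * V1 * (1 - ENNReal.ofReal q)⁻¹, ?_, ?_⟩
  · refine ENNReal.mul_ne_top (ENNReal.mul_ne_top ofReal_ne_top hV1top) ?_
    rw [ENNReal.inv_ne_top]
    have : ENNReal.ofReal q < 1 := by
      rw [← ENNReal.ofReal_one]
      exact ENNReal.ofReal_lt_ofReal_iff_of_nonneg hq0.le |>.2 hq1
    simpa [pos_iff_ne_zero] using (tsub_pos_iff_lt.2 this)
  intro r hr
  set A : ℕ → Set E3 := fun k => ball (0 : E3) (r / 2 ^ k) \ ball 0 (r / 2 ^ (k + 1)) with hA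
  have hsub : ball (0 : E3) r ⊆ (⋃ k, A k) ∪ {0} := by
    intro w hw
    rcases eq_or_ne w 0 with h0 | h0
    · exact Or.inr (by simp [h0])
    left
    have hw0 : 0 < ‖w‖ := norm_pos_iff.2 h0
    have hwr : ‖w‖ < r := by simpa [mem_ball_zero_iff] using hw
    have hex : ∃ k : ℕ, r / 2 ^ (k + 1) ≤ ‖w‖ := by
      obtain ⟨n, hn⟩ := exists_nat_gt (r / ‖w‖)
      refine ⟨n, ?_⟩
      have h2n : (n : ℝ) < 2 ^ (n + 1) := by
        calc (n : ℝ) < ((2 ^ n : ℕ) : ℝ) := by exact_mod_cast (Nat.lt_two_pow_self (n := n))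
        _ ≤ 2 ^ (n + 1) := by
            push_cast
            rw [pow_succ]
            nlinarith [pow_pos (by norm_num : (0:ℝ) < 2) n]
      rw [div_lt_iff₀ hw0] at hn
      rw [div_le_iff₀ (by positivity)]
      nlinarith
    classical
    set k := Nat.find hex with hk
    have hlow : r / 2 ^ (k + 1) ≤ ‖w‖ := Nat.find_spec hex
    have hhigh : ‖w‖ < r / 2 ^ k := by
      rcases Nat.eq_zero_or_pos k with h | h
      · simpa [h] using hwr
      · have := Nat.find_min hex (m := k - 1) (by omega)
        push_neg at this
        rwa [show k - 1 + 1 = k by omega] at this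
    refine Set.mem_iUnion.2 ⟨k, ?_, ?_⟩
    · simpa [mem_ball_zero_iff] using hhigh
    · simp [mem_ball_zero_iff, not_lt.2 hlow]
  have step1 : ∫⁻ w in ball (0 : E3) r, ENNReal.ofReal (‖w‖ ^ γ) ≤
      ∑' k, ∫⁻ w in A k, ENNReal.ofReal (‖w‖ ^ γ) := by
    calc ∫⁻ w in ball (0 : E3) r, ENNReal.ofReal (‖w‖ ^ γ)
        ≤ ∫⁻ w in (⋃ k, A k) ∪ {0}, ENNReal.ofReal (‖w‖ ^ γ) := lintegral_mono_set hsub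
      _ ≤ (∫⁻ w in ⋃ k, A k, ENNReal.ofReal (‖w‖ ^ γ)) +
          ∫⁻ w in ({0} : Set E3), ENNReal.ofReal (‖w‖ ^ γ) := lintegral_union_le _ _ _
      _ = ∫⁻ w in ⋃ k, A k, ENNReal.ofReal (‖w‖ ^ γ) := by
          rw [setLIntegral_measure_zero _ _ (measure_singleton 0), add_zero]
      _ ≤ _ := lintegral_iUnion_le _ _
  have step2 : ∀ k : ℕ, ∫⁻ w in A k, ENNReal.ofReal (‖w‖ ^ γ) ≤
      ENNReal.ofReal ((r / 2 ^ (k + 1)) ^ γ * (r / 2 ^ k) ^ (3 : ℕ)) * V1 := by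
    intro k
    have hrk : (0 : ℝ) < r / 2 ^ (k + 1) := by positivity
    have hbound : ∀ w ∈ A k, ENNReal.ofReal (‖w‖ ^ γ) ≤
        ENNReal.ofReal ((r / 2 ^ (k + 1)) ^ γ) := by
      intro w hwA
      have h1 : r / 2 ^ (k + 1) ≤ ‖w‖ := by
        have := hwA.2
        simpa [mem_ball_zero_iff, not_lt] using this
      exact ENNReal.ofReal_le_ofReal (Real.rpow_le_rpow_of_nonpos hrk h1 hγ'.le)
    calc ∫⁻ w in A k, ENNReal.ofReal (‖w‖ ^ γ)
        ≤ ∫⁻ _ in A k, ENNReal.ofReal ((r / 2 ^ (k + 1)) ^ γ) :=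
          setLIntegral_mono' (measurableSet_ball.diff measurableSet_ball) hbound
      _ = ENNReal.ofReal ((r / 2 ^ (k + 1)) ^ γ) * volume (A k) := setLIntegral_const _ _
      _ ≤ ENNReal.ofReal ((r / 2 ^ (k + 1)) ^ γ) * volume (ball (0 : E3) (r / 2 ^ k)) := by
          gcongr
          exact Set.diff_subset
      _ = ENNReal.ofReal ((r / 2 ^ (k + 1)) ^ γ) *
            (ENNReal.ofReal ((r / 2 ^ k) ^ (3 : ℕ)) * V1) := by
          rw [Measure.addHaar_ball _ _ (by positivity : (0:ℝ) ≤ r / 2 ^ k)]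
          congr 2
          simp [finrank_euclideanSpace_fin]
      _ = ENNReal.ofReal ((r / 2 ^ (k + 1)) ^ γ * (r / 2 ^ k) ^ (3 : ℕ)) * V1 := by
          rw [ENNReal.ofReal_mul (Real.rpow_nonneg hrk.le _), mul_assoc]
  have key : ∀ k : ℕ, (r / 2 ^ (k + 1)) ^ γ * (r / 2 ^ k) ^ (3 : ℕ) =
      r ^ (γ + 3) * (2:ℝ) ^ (-γ) * q ^ k := by
    intro k
    have h2 : (0 : ℝ) < 2 := two_pos
    have e1 : (r / 2 ^ (k + 1)) ^ γ = r ^ γ * (2:ℝ) ^ (-(((k:ℝ) + 1) * γ)) := by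
      rw [Real.div_rpow hr.le (by positivity), ← Real.rpow_natCast 2 (k+1),
        ← Real.rpow_mul h2.le, div_eq_mul_inv, ← Real.rpow_neg h2.le]
      push_cast
      ring_nf
    have e2 : (r / 2 ^ k) ^ (3:ℕ) = r ^ (3:ℝ) * (2:ℝ) ^ (-((k:ℝ) * 3)) := by
      rw [div_pow, ← Real.rpow_natCast r 3, ← Real.rpow_natCast (2^k) 3,
        ← Real.rpow_natCast 2 k, ← Real.rpow_mul h2.le, div_eq_mul_inv,
        ← Real.rpow_neg (by positivity)]
      norm_num
    have e3 : q ^ k = (2:ℝ) ^ (-((γ + 3) * (k:ℝ))) := by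
      rw [hq, ← Real.rpow_natCast ((2:ℝ) ^ (-(γ+3))) k, ← Real.rpow_mul h2.le]
      ring_nf
    rw [e1, e2, e3]
    calc r ^ γ * 2 ^ (-((↑k + 1) * γ)) * (r ^ (3:ℝ) * 2 ^ (-((k:ℝ) * 3)))
        = (r ^ γ * r ^ (3:ℝ)) * (2 ^ (-((↑k + 1) * γ)) * 2 ^ (-((k:ℝ) * 3))) := by ring
      _ = r ^ (γ + 3) * 2 ^ ((-((↑k + 1) * γ)) + (-((k:ℝ) * 3))) := by
          rw [← Real.rpow_add hr, ← Real.rpow_add h2]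
      _ = r ^ (γ + 3) * 2 ^ ((-γ) + (-((γ + 3) * (k:ℝ)))) := by
          rw [show (-(((k:ℝ) + 1) * γ)) + (-((k:ℝ) * 3)) = (-γ) + (-((γ + 3) * (k:ℝ))) by ring]
      _ = r ^ (γ + 3) * (2 ^ (-γ) * 2 ^ (-((γ + 3) * (k:ℝ)))) := by rw [Real.rpow_add h2]
      _ = _ := by ring
  calc ∫⁻ w in ball (0 : E3) r, ENNReal.ofReal (‖w‖ ^ γ)
      ≤ ∑' k, ∫⁻ w in A k, ENNReal.ofReal (‖w‖ ^ γ) := step1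
    _ ≤ ∑' k, ENNReal.ofReal ((r / 2 ^ (k + 1)) ^ γ * (r / 2 ^ k) ^ (3 : ℕ)) * V1 :=
        ENNReal.tsum_le_tsum fun k => step2 k
    _ = ∑' k, (ENNReal.ofReal (r ^ (γ + 3) * (2:ℝ) ^ (-γ)) * V1) * (ENNReal.ofReal q) ^ k := by
        congr 1
        funext k
        rw [key k, ENNReal.ofReal_mul (by positivity), ENNReal.ofReal_pow hq0.le]
        ring
    _ = (ENNReal.ofReal (r ^ (γ + 3) * (2:ℝ) ^ (-γ)) * V1) * (1 - ENNReal.ofReal q)⁻¹ := by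
        rw [ENNReal.tsum_mul_left, ENNReal.tsum_geometric]
    _ = ENNReal.ofReal (r ^ (γ + 3)) *
        (ENNReal.ofReal ((2:ℝ) ^ (-γ)) * V1 * (1 - ENNReal.ofReal q)⁻¹) := by
        rw [ENNReal.ofReal_mul (Real.rpow_nonneg hr.le _)]
        ring

-- square-root facts
private lemma sqrtS_sq {v : E3} : ((1 + ‖v‖ ^ 2) ^ ((1:ℝ)/2)) ^ (2:ℕ) = 1 + ‖v‖ ^ 2 := by
  rw [← Real.rpow_natCast ((1 + ‖v‖ ^ 2) ^ ((1:ℝ)/2)) 2, ← Real.rpow_mul (by positivity)]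
  norm_num

private lemma sqrtS_rpow {v : E3} {γ : ℝ} :
    ((1 + ‖v‖ ^ 2) ^ ((1:ℝ)/2)) ^ γ = (1 + ‖v‖ ^ 2) ^ (γ / 2) := by
  rw [← Real.rpow_mul (by positivity : (0:ℝ) ≤ 1 + ‖v‖ ^ 2)]
  congr 1
  ring

private lemma norm_le_sqrtS (v : E3) : ‖v‖ ≤ (1 + ‖v‖ ^ 2) ^ ((1:ℝ)/2) := by
  have h := Real.rpow_le_rpow (by positivity : (0:ℝ) ≤ ‖v‖ ^ 2)
    (by nlinarith [sq_nonneg ‖v‖] : ‖v‖ ^ 2 ≤ 1 + ‖v‖ ^ 2) (by norm_num : (0:ℝ) ≤ 1/2)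
  calc ‖v‖ = (‖v‖ ^ (2:ℕ)) ^ ((1:ℝ)/2) := by
        rw [← Real.rpow_natCast ‖v‖ 2, ← Real.rpow_mul (norm_nonneg _)]
        norm_num
    _ ≤ _ := h

private lemma one_le_sqrtS (v : E3) : 1 ≤ (1 + ‖v‖ ^ 2) ^ ((1:ℝ)/2) := by
  have h := Real.rpow_le_rpow zero_le_one
    (by nlinarith [sq_nonneg ‖v‖] : (1:ℝ) ≤ 1 + ‖v‖ ^ 2) (by norm_num : (0:ℝ) ≤ 1/2)
  simpa using h

private lemma sqrtS_le (v : E3) : (1 + ‖v‖ ^ 2) ^ ((1:ℝ)/2) ≤ 1 + ‖v‖ := by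
  have h1 : (1 + ‖v‖ ^ 2 : ℝ) ≤ (1 + ‖v‖) ^ (2:ℕ) := by nlinarith [norm_nonneg v]
  have h2 : ((1 + ‖v‖) ^ (2:ℕ) : ℝ) ^ ((1:ℝ)/2) = 1 + ‖v‖ := by
    rw [← Real.rpow_natCast (1 + ‖v‖) 2, ← Real.rpow_mul (by positivity)]
    norm_num
  calc (1 + ‖v‖ ^ 2) ^ ((1:ℝ)/2) ≤ ((1 + ‖v‖) ^ (2:ℕ) : ℝ) ^ ((1:ℝ)/2) :=
        Real.rpow_le_rpow (by positivity) h1 (by norm_num)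
    _ = 1 + ‖v‖ := h2

/-- Main estimate over Euclidean space, in `lintegral` form. -/
private lemma main_E (γ δ : ℝ) (hγ : -3 < γ) (hδ : 0 < δ) :
    ∃ C > (0:ℝ), ∀ v : E3,
      ∫⁻ v' : E3, ENNReal.ofReal (‖v - v'‖ ^ γ * Real.exp (-δ * ‖v'‖ ^ 2)) ≤
        ENNReal.ofReal (C * (1 + ‖v‖ ^ 2) ^ (γ / 2)) := by
  rcases le_or_gt 0 γ with hγ0 | hγ0
  · -- Case γ ≥ 0
    set C₁ : ℝ := Real.exp (γ ^ 2 / (2 * δ)) with hC₁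
    set GG := ∫⁻ x : E3, ENNReal.ofReal (Real.exp (-(δ/2) * ‖x‖ ^ 2)) with hGG
    have hGGtop : GG ≠ ∞ := gauss_lintegral_ne_top' (by linarith)
    refine ⟨C₁ * GG.toReal + 1, by positivity, fun v => ?_⟩
    set s : ℝ := (1 + ‖v‖ ^ 2) ^ ((1:ℝ)/2) with hs
    have hs1 : 1 ≤ s := one_le_sqrtS v
    have hs0 : (0:ℝ) ≤ s := by linarith
    have hsγ0 : (0:ℝ) ≤ s ^ γ := Real.rpow_nonneg hs0 γ
    have hptwise : ∀ v' : E3, ‖v - v'‖ ^ γ * Real.exp (-δ * ‖v'‖ ^ 2) ≤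
        (s ^ γ * C₁) * Real.exp (-(δ/2) * ‖v'‖ ^ 2) := by
      intro v'
      set t : ℝ := ‖v'‖ with ht
      have ht0 : 0 ≤ t := norm_nonneg _
      have h1 : ‖v - v'‖ ≤ s * (1 + t) := by
        calc ‖v - v'‖ ≤ ‖v‖ + ‖v'‖ := norm_sub_le _ _
          _ ≤ s + s * t := by
              have := norm_le_sqrtS v
              have h2 : ‖v'‖ ≤ s * t := by nlinarith
              simpa [hs] using add_le_add this h2
          _ = s * (1 + t) := by ring
      have h2 : ‖v - v'‖ ^ γ ≤ s ^ γ * (1 + t) ^ γ := by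
        calc ‖v - v'‖ ^ γ ≤ (s * (1 + t)) ^ γ :=
              Real.rpow_le_rpow (norm_nonneg _) h1 hγ0
          _ = s ^ γ * (1 + t) ^ γ := Real.mul_rpow hs0 (by positivity)
      have h3 : (1 + t) ^ γ ≤ Real.exp (t * γ) := by
        calc (1 + t) ^ γ ≤ Real.exp t ^ γ :=
              Real.rpow_le_rpow (by positivity) (by linarith [Real.add_one_le_exp t]) hγ0
          _ = Real.exp (t * γ) := by
              rw [← Real.exp_one_rpow t, ← Real.rpow_mul (Real.exp_pos 1).le,
                Real.exp_one_rpow]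
      have h4 : Real.exp (t * γ) * Real.exp (-δ * t ^ 2) ≤
          C₁ * Real.exp (-(δ/2) * t ^ 2) := by
        rw [← Real.exp_add, hC₁, ← Real.exp_add]
        apply Real.exp_le_exp.2
        rw [← sub_nonneg]
        have expand : γ ^ 2 / (2 * δ) + -(δ / 2) * t ^ 2 - (t * γ + -δ * t ^ 2) =
            (γ - δ * t) ^ 2 / (2 * δ) := by
          field_simp
          ring
        rw [expand]
        positivity
      calc ‖v - v'‖ ^ γ * Real.exp (-δ * t ^ 2)
          ≤ (s ^ γ * (1 + t) ^ γ) * Real.exp (-δ * t ^ 2) := by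
            apply mul_le_mul_of_nonneg_right h2 (Real.exp_pos _).le
        _ ≤ (s ^ γ * Real.exp (t * γ)) * Real.exp (-δ * t ^ 2) := by
            have := mul_le_mul_of_nonneg_left h3 hsγ0
            apply mul_le_mul_of_nonneg_right this (Real.exp_pos _).le
        _ = s ^ γ * (Real.exp (t * γ) * Real.exp (-δ * t ^ 2)) := by ring
        _ ≤ s ^ γ * (C₁ * Real.exp (-(δ/2) * t ^ 2)) := by
            apply mul_le_mul_of_nonneg_left h4 hsγ0
        _ = (s ^ γ * C₁) * Real.exp (-(δ/2) * t ^ 2) := by ring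
    calc ∫⁻ v' : E3, ENNReal.ofReal (‖v - v'‖ ^ γ * Real.exp (-δ * ‖v'‖ ^ 2))
        ≤ ∫⁻ v' : E3, ENNReal.ofReal (s ^ γ * C₁) *
            ENNReal.ofReal (Real.exp (-(δ/2) * ‖v'‖ ^ 2)) := by
          apply lintegral_mono
          intro v'
          dsimp only
          rw [← ENNReal.ofReal_mul (mul_nonneg hsγ0 (Real.exp_pos _).le)]
          exact ENNReal.ofReal_le_ofReal (hptwise v')
      _ = ENNReal.ofReal (s ^ γ * C₁) * GG := lintegral_const_mul' _ _ ofReal_ne_top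
      _ = ENNReal.ofReal (s ^ γ * C₁ * GG.toReal) := by
          conv_lhs => rw [← ENNReal.ofReal_toReal hGGtop]
          rw [← ENNReal.ofReal_mul (mul_nonneg hsγ0 (Real.exp_pos _).le)]
      _ ≤ ENNReal.ofReal ((C₁ * GG.toReal + 1) * (1 + ‖v‖ ^ 2) ^ (γ / 2)) := by
          apply ENNReal.ofReal_le_ofReal
          rw [← sqrtS_rpow (v := v) (γ := γ), ← hs]
          have hsγ : (0:ℝ) ≤ s ^ γ := Real.rpow_nonneg (by positivity) γ
          have hG0 : (0:ℝ) ≤ GG.toReal := ENNReal.toReal_nonneg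
          nlinarith [Real.exp_pos (γ ^ 2 / (2 * δ))]
  · -- Case γ < 0
    obtain ⟨K, hKtop, hK⟩ := ball_kernel' hγ hγ0
    set GG := ∫⁻ x : E3, ENNReal.ofReal (Real.exp (-δ * ‖x‖ ^ 2)) with hGG
    have hGGtop : GG ≠ ∞ := gauss_lintegral_ne_top' hδ
    set D : ℝ≥0∞ := ENNReal.ofReal ((2:ℝ) ^ (-γ)) *
      (ENNReal.ofReal (Real.exp (3 + 9/δ)) * K + GG) with hD
    have hDtop : D ≠ ∞ :=
      ENNReal.mul_ne_top ofReal_ne_top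
        (ENNReal.add_ne_top.2 ⟨ENNReal.mul_ne_top ofReal_ne_top hKtop, hGGtop⟩)
    refine ⟨D.toReal + 1, by positivity, fun v => ?_⟩
    set s : ℝ := (1 + ‖v‖ ^ 2) ^ ((1:ℝ)/2) with hs
    have hs1 : 1 ≤ s := one_le_sqrtS v
    have hs0 : 0 < s := by linarith
    set ρ : ℝ := s / 2 with hρ
    have hρ0 : 0 < ρ := by positivity
    set m : ℝ := max (‖v‖ - ρ) 0 with hm
    have hm0 : 0 ≤ m := le_max_right _ _
    set Mv : ℝ := Real.exp (-δ * m ^ 2) with hMv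
    have hMv0 : 0 < Mv := Real.exp_pos _
    -- pointwise bound
    have hptwise : ∀ v' : E3,
        ENNReal.ofReal (‖v - v'‖ ^ γ * Real.exp (-δ * ‖v'‖ ^ 2)) ≤
          (ball v ρ).indicator (fun v' => ENNReal.ofReal (Mv * ‖v - v'‖ ^ γ)) v' +
          ENNReal.ofReal (ρ ^ γ * Real.exp (-δ * ‖v'‖ ^ 2)) := by
      intro v'
      by_cases hv' : v' ∈ ball v ρ
      · rw [Set.indicator_of_mem hv']
        refine le_add_right (ENNReal.ofReal_le_ofReal ?_)
        have hdist : ‖v - v'‖ < ρ := by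
          have := mem_ball.1 hv'
          rwa [dist_eq_norm, norm_sub_rev] at this
        have hnv' : m ≤ ‖v'‖ := by
          apply max_le _ (norm_nonneg _)
          have : ‖v‖ - ‖v'‖ ≤ ‖v - v'‖ := by
            have := norm_sub_norm_le v v'
            linarith [abs_le.1 (abs_norm_sub_norm_le v v')]
          linarith
        have hexp : Real.exp (-δ * ‖v'‖ ^ 2) ≤ Mv := by
          apply Real.exp_le_exp.2
          nlinarith [mul_nonneg (sub_nonneg.2 hnv') (add_nonneg (norm_nonneg v') hm0), hδ.le,
            mul_le_mul_of_nonneg_left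
              (mul_nonneg (sub_nonneg.2 hnv') (add_nonneg (norm_nonneg v') hm0)) hδ.le]
        calc ‖v - v'‖ ^ γ * Real.exp (-δ * ‖v'‖ ^ 2) ≤ ‖v - v'‖ ^ γ * Mv :=
              mul_le_mul_of_nonneg_left hexp (Real.rpow_nonneg (norm_nonneg _) γ)
          _ = Mv * ‖v - v'‖ ^ γ := by ring
      · rw [Set.indicator_of_notMem hv', zero_add]
        apply ENNReal.ofReal_le_ofReal
        have hdist : ρ ≤ ‖v - v'‖ := by
          have := mem_ball.not.1 hv'
          rw [dist_eq_norm, norm_sub_rev] at this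
          push_neg at this
          exact this
        exact mul_le_mul_of_nonneg_right
          (Real.rpow_le_rpow_of_nonpos hρ0 hdist hγ0.le) (Real.exp_pos _).le
    -- compute the two pieces
    have hker : Measurable fun w : E3 => ENNReal.ofReal (‖w‖ ^ γ) :=
      (measurable_norm.pow_const γ).ennreal_ofReal
    have hker2 : Measurable fun v' : E3 => ENNReal.ofReal (Mv * ‖v - v'‖ ^ γ) := by
      apply Measurable.ennreal_ofReal
      exact measurable_const.mul ((measurable_const.sub measurable_id).norm.pow_const γ)
    have hpiece1 :
        ∫⁻ v', (ball v ρ).indicator (fun v' => ENNReal.ofReal (Mv * ‖v - v'‖ ^ γ)) v' ≤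
          ENNReal.ofReal Mv * (ENNReal.ofReal (ρ ^ (γ + 3)) * K) := by
      have htrans : ∀ v' : E3,
          (ball v ρ).indicator (fun v' => ENNReal.ofReal (Mv * ‖v - v'‖ ^ γ)) v' =
            (ball (0:E3) ρ).indicator
              (fun w => ENNReal.ofReal Mv * ENNReal.ofReal (‖w‖ ^ γ)) (v - v') := by
        intro v'
        have hmem : v' ∈ ball v ρ ↔ v - v' ∈ ball (0:E3) ρ := by
          rw [mem_ball, mem_ball_zero_iff, dist_eq_norm, norm_sub_rev]
        by_cases hv' : v' ∈ ball v ρ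
        · rw [Set.indicator_of_mem hv', Set.indicator_of_mem (hmem.1 hv'),
            ENNReal.ofReal_mul hMv0.le]
        · rw [Set.indicator_of_notMem hv', Set.indicator_of_notMem (fun h => hv' (hmem.2 h))]
      calc ∫⁻ v', (ball v ρ).indicator (fun v' => ENNReal.ofReal (Mv * ‖v - v'‖ ^ γ)) v'
          = ∫⁻ v', (ball (0:E3) ρ).indicator
              (fun w => ENNReal.ofReal Mv * ENNReal.ofReal (‖w‖ ^ γ)) (v - v') := by
            simp_rw [htrans]
        _ = ∫⁻ w, (ball (0:E3) ρ).indicator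
              (fun w => ENNReal.ofReal Mv * ENNReal.ofReal (‖w‖ ^ γ)) w :=
            (Measure.measurePreserving_sub_left volume v).lintegral_comp
              ((measurable_const.mul hker).indicator measurableSet_ball)
        _ = ∫⁻ w in ball (0:E3) ρ, ENNReal.ofReal Mv * ENNReal.ofReal (‖w‖ ^ γ) :=
            lintegral_indicator measurableSet_ball _
        _ = ENNReal.ofReal Mv * ∫⁻ w in ball (0:E3) ρ, ENNReal.ofReal (‖w‖ ^ γ) :=
            lintegral_const_mul' _ _ ofReal_ne_top
        _ ≤ ENNReal.ofReal Mv * (ENNReal.ofReal (ρ ^ (γ + 3)) * K) := by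
            gcongr
            exact hK ρ hρ0
    have hpiece2 :
        ∫⁻ v' : E3, ENNReal.ofReal (ρ ^ γ * Real.exp (-δ * ‖v'‖ ^ 2)) =
          ENNReal.ofReal (ρ ^ γ) * GG := by
      simp_rw [ENNReal.ofReal_mul (Real.rpow_nonneg hρ0.le γ)]
      exact lintegral_const_mul' _ _ ofReal_ne_top
    -- numeric facts
    have hsle : s ≤ 1 + ‖v‖ := sqrtS_le v
    have hC' : Mv * s ^ (3:ℝ) ≤ 8 * Real.exp (3 + 9/δ) := by
      set t : ℝ := ‖v‖ with htdef
      have ht0 : 0 ≤ t := norm_nonneg _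
      have hs3 : s ^ (3:ℝ) ≤ (1 + t) ^ (3:ℕ) := by
        calc s ^ (3:ℝ) ≤ (1 + t) ^ (3:ℝ) :=
              Real.rpow_le_rpow hs0.le hsle (by norm_num)
          _ = (1 + t) ^ (3:ℕ) := by
              rw [show (3:ℝ) = ((3:ℕ):ℝ) by norm_num, Real.rpow_natCast]
      rcases le_or_gt t 1 with ht1 | ht1
      · have hMv1 : Mv ≤ 1 := Real.exp_le_one_iff.2 (by nlinarith)
        have h8 : ((1 + t) ^ (3:ℕ) : ℝ) ≤ 8 := by nlinarith
        nlinarith [Real.one_le_exp (by positivity : (0:ℝ) ≤ 3 + 9/δ),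
          Real.rpow_nonneg hs0.le (3:ℝ)]
      · have hmge : (t - 1)/2 ≤ m := by
          apply le_max_of_le_left
          have : ρ ≤ (1 + t)/2 := by rw [hρ]; linarith
          linarith
        have hMvle : Mv ≤ Real.exp (-δ * ((t-1)/2) ^ 2) := by
          apply Real.exp_le_exp.2
          have h1 : ((t-1)/2) ^ 2 ≤ m ^ 2 := by nlinarith
          nlinarith
        have hcube : ((1 + t) ^ (3:ℕ) : ℝ) ≤ Real.exp (3 * t) := by
          calc ((1 + t) ^ (3:ℕ) : ℝ) ≤ Real.exp t ^ (3:ℕ) := by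
                apply pow_le_pow_left₀ (by positivity)
                linarith [Real.add_one_le_exp t]
            _ = Real.exp (3 * t) := by
                rw [← Real.exp_nat_mul]
                norm_num
        have hfinal : Real.exp (-δ * ((t-1)/2) ^ 2) * Real.exp (3 * t) ≤
            Real.exp (3 + 9/δ) := by
          rw [← Real.exp_add]
          apply Real.exp_le_exp.2
          rw [← sub_nonneg]
          have expand : 3 + 9/δ - (-δ * ((t-1)/2) ^ 2 + 3 * t) =
              (δ * (t - 1) - 6) ^ 2 / (4 * δ) := by
            field_simp
            ring
          rw [expand]
          positivity
        calc Mv * s ^ (3:ℝ) ≤ Real.exp (-δ * ((t-1)/2) ^ 2) * Real.exp (3 * t) := by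
              apply mul_le_mul hMvle (hs3.trans hcube) (Real.rpow_nonneg hs0.le _)
                (Real.exp_pos _).le
          _ ≤ Real.exp (3 + 9/δ) := hfinal
          _ ≤ 8 * Real.exp (3 + 9/δ) := by nlinarith [Real.exp_pos (3 + 9/δ)]
    -- assemble
    have hρsplit : ρ ^ (γ + 3) = ρ ^ γ * ρ ^ (3:ℝ) := Real.rpow_add hρ0 γ 3
    have hMvρ : Mv * ρ ^ (γ + 3) ≤ ρ ^ γ * Real.exp (3 + 9/δ) := by
      rw [hρsplit]
      have hρ3 : ρ ^ (3:ℝ) = s ^ (3:ℝ) / 8 := by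
        rw [hρ, Real.div_rpow hs0.le (by norm_num : (0:ℝ) ≤ 2),
          show ((2:ℝ) ^ (3:ℝ)) = 8 by
            rw [show (3:ℝ) = ((3:ℕ):ℝ) by norm_num, Real.rpow_natCast]; norm_num]
      have hργ : (0:ℝ) ≤ ρ ^ γ := Real.rpow_nonneg hρ0.le γ
      calc Mv * (ρ ^ γ * ρ ^ (3:ℝ)) = ρ ^ γ * (Mv * s ^ (3:ℝ)) / 8 := by
            rw [hρ3]; ring
        _ ≤ ρ ^ γ * (8 * Real.exp (3 + 9/δ)) / 8 := by
            have := mul_le_mul_of_nonneg_left hC' hργ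
            linarith
        _ = ρ ^ γ * Real.exp (3 + 9/δ) := by ring
    have hργ_eq : ρ ^ γ = s ^ γ * (2:ℝ) ^ (-γ) := by
      rw [hρ, Real.div_rpow hs0.le (by norm_num : (0:ℝ) ≤ 2),
        Real.rpow_neg (by norm_num : (0:ℝ) ≤ 2), div_eq_mul_inv]
    have hsγ0 : (0:ℝ) ≤ s ^ γ := Real.rpow_nonneg hs0.le γ
    have hργ0 : (0:ℝ) ≤ ρ ^ γ := Real.rpow_nonneg hρ0.le γ
    calc ∫⁻ v' : E3, ENNReal.ofReal (‖v - v'‖ ^ γ * Real.exp (-δ * ‖v'‖ ^ 2))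
        ≤ ∫⁻ v', ((ball v ρ).indicator (fun v' => ENNReal.ofReal (Mv * ‖v - v'‖ ^ γ)) v' +
            ENNReal.ofReal (ρ ^ γ * Real.exp (-δ * ‖v'‖ ^ 2))) := lintegral_mono hptwise
      _ = (∫⁻ v', (ball v ρ).indicator (fun v' => ENNReal.ofReal (Mv * ‖v - v'‖ ^ γ)) v') +
          ∫⁻ v' : E3, ENNReal.ofReal (ρ ^ γ * Real.exp (-δ * ‖v'‖ ^ 2)) :=
          lintegral_add_left (hker2.indicator measurableSet_ball) _
      _ ≤ ENNReal.ofReal Mv * (ENNReal.ofReal (ρ ^ (γ + 3)) * K) +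
          ENNReal.ofReal (ρ ^ γ) * GG := by
          rw [hpiece2]
          exact add_le_add_left hpiece1 _
      _ = ENNReal.ofReal (Mv * ρ ^ (γ + 3)) * K + ENNReal.ofReal (ρ ^ γ) * GG := by
          rw [ENNReal.ofReal_mul hMv0.le, mul_assoc]
      _ ≤ ENNReal.ofReal (ρ ^ γ * Real.exp (3 + 9/δ)) * K +
          ENNReal.ofReal (ρ ^ γ) * GG := by
          gcongr
      _ = ENNReal.ofReal (s ^ γ) * D := by
          have e1 : ENNReal.ofReal (ρ ^ γ) =
              ENNReal.ofReal (s ^ γ) * ENNReal.ofReal ((2:ℝ) ^ (-γ)) := by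
            rw [hργ_eq, ENNReal.ofReal_mul hsγ0]
          have e2 : ENNReal.ofReal (ρ ^ γ * Real.exp (3 + 9/δ)) =
              ENNReal.ofReal (ρ ^ γ) * ENNReal.ofReal (Real.exp (3 + 9/δ)) :=
            ENNReal.ofReal_mul hργ0
          rw [e2, e1, hD]
          ring
      _ = ENNReal.ofReal (s ^ γ * D.toReal) := by
          rw [ENNReal.ofReal_mul hsγ0, ENNReal.ofReal_toReal hDtop]
      _ ≤ ENNReal.ofReal ((D.toReal + 1) * (1 + ‖v‖ ^ 2) ^ (γ / 2)) := by
          apply ENNReal.ofReal_le_ofReal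
          rw [← sqrtS_rpow (v := v) (γ := γ), ← hs]
          nlinarith [ENNReal.toReal_nonneg (a := D)]

open MeasureTheory Real in
/-- Singular convolution estimate: for `γ > -3` and `δ > 0`, the convolution of
`|v|^γ` with a Gaussian is bounded by `C⟨v⟩^γ`. -/
theorem singular_integration (γ δ : ℝ) (hγ : -3 < γ) (hδ : 0 < δ) :
    ∃ C > 0, ∀ v : Fin 3 → ℝ,
      (∫ v' : Fin 3 → ℝ,
          (∑ i, (v i - v' i) ^ 2) ^ (γ / 2) * Real.exp (-δ * ∑ i, v' i ^ 2)) ≤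
        C * (1 + ∑ i, v i ^ 2) ^ (γ / 2) := by
  obtain ⟨C, hC0, hC⟩ := main_E γ δ hγ hδ
  refine ⟨C, hC0, fun v => ?_⟩
  set e := (MeasurableEquiv.toLp 2 (Fin 3 → ℝ)).symm with he
  set w : E3 := e.symm v with hw
  have happ : ∀ (x : E3) (i : Fin 3), e x i = x i := fun x i => rfl
  have hwapp : ∀ i : Fin 3, w i = v i := fun i => rfl
  have hsum : ∀ y : E3, (∑ i, y i ^ 2 : ℝ) = ‖y‖ ^ 2 := by
    intro y
    rw [EuclideanSpace.norm_eq, Real.sq_sqrt (by positivity)]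
    simp [sq_abs]
  have hpow : ∀ z : E3, ((‖z‖ ^ 2 : ℝ)) ^ (γ / 2) = ‖z‖ ^ γ := by
    intro z
    rw [← Real.rpow_natCast ‖z‖ 2, ← Real.rpow_mul (norm_nonneg z),
      show ((2:ℕ):ℝ) * (γ / 2) = γ by push_cast; ring]
  have key : ∀ x : E3,
      (∑ i, (v i - e x i) ^ 2 : ℝ) ^ (γ / 2) * Real.exp (-δ * ∑ i, e x i ^ 2) =
        ‖w - x‖ ^ γ * Real.exp (-δ * ‖x‖ ^ 2) := by
    intro x
    have h1 : (∑ i, (v i - e x i) ^ 2 : ℝ) = ‖w - x‖ ^ 2 := by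
      rw [← hsum (w - x)]
      rfl
    have h2 : (∑ i, e x i ^ 2 : ℝ) = ‖x‖ ^ 2 := by
      rw [← hsum x]
      rfl
    rw [h1, h2, hpow (w - x)]
  have htransfer : (∫ v' : Fin 3 → ℝ,
      (∑ i, (v i - v' i) ^ 2 : ℝ) ^ (γ / 2) * Real.exp (-δ * ∑ i, v' i ^ 2)) =
      ∫ x : E3, ‖w - x‖ ^ γ * Real.exp (-δ * ‖x‖ ^ 2) := by
    rw [← (EuclideanSpace.volume_preserving_symm_measurableEquiv_toLp (Fin 3)).integral_comp
      (MeasurableEquiv.measurableEmbedding _) (fun v' : Fin 3 → ℝ =>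
        (∑ i, (v i - v' i) ^ 2 : ℝ) ^ (γ / 2) * Real.exp (-δ * ∑ i, v' i ^ 2))]
    congr 1
    funext x
    exact key x
  rw [htransfer]
  have hmeas : AEStronglyMeasurable (fun x : E3 => ‖w - x‖ ^ γ * Real.exp (-δ * ‖x‖ ^ 2))
      volume := by
    apply Measurable.aestronglyMeasurable
    exact ((measurable_const.sub measurable_id).norm.pow_const γ).mul
      (Real.measurable_exp.comp (measurable_const.mul (measurable_norm.pow measurable_const)))
  rw [integral_eq_lintegral_of_nonneg_ae
    (Filter.Eventually.of_forall fun x => by positivity) hmeas]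
  have hrhs : (1 + ∑ i, v i ^ 2 : ℝ) = 1 + ‖w‖ ^ 2 := by
    rw [← hsum w]
    congr 1
  rw [hrhs]
  apply ENNReal.toReal_le_of_le_ofReal
  · exact mul_nonneg hC0.le (Real.rpow_nonneg (by positivity) _)
  · exact hC w
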